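/- For n ≥ 3, the determinant of the adjacency matrix of the n×n rook's graph equals (-2)^{(n-1)^2} · (n-2)^{2n-2} · 2(n-1); in particular the cokernel of the adjacency matrix (the Smith group) is a finite group of order 2^{(n-1)^2} · (n-2)^{2n-2} · 2(n-1). -/

import Mathlib

/-- The adjacency matrix (over `ℤ`) of the `n × n` rook's graph: vertices are
squares of an `n × n` grid, adjacent when distinct and in the same row or column. -/
def rookAdj (n : ℕ) : Matrix (Fin n × Fin n) (Fin n × Fin n) ℤ :=
  fun u v => if u ≠ v ∧ (u.1 = v.1 ∨ u.2 = v.2) then 1 else 0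

/-- The Laplacian matrix `L = D - A` of the rook's graph, where `D` is the diagonal
matrix of vertex degrees. -/
def rookLap (n : ℕ) : Matrix (Fin n × Fin n) (Fin n × Fin n) ℤ :=
  Matrix.diagonal (fun u => ∑ v, rookAdj n u v) - rookAdj n

/-- The adjacency matrix (over `ℤ`) of the complement of the rook's graph. -/
def rookcAdj (n : ℕ) : Matrix (Fin n × Fin n) (Fin n × Fin n) ℤ :=
  fun u v => if u ≠ v ∧ u.1 ≠ v.1 ∧ u.2 ≠ v.2 then 1 else 0

/-- The Laplacian matrix of the complement of the rook's graph. -/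
def rookcLap (n : ℕ) : Matrix (Fin n × Fin n) (Fin n × Fin n) ℤ :=
  Matrix.diagonal (fun u => ∑ v, rookcAdj n u v) - rookcAdj n


open Matrix Kronecker

variable {n : ℕ}

/-- J - I -/
def rookB (n : ℕ) : Matrix (Fin n) (Fin n) ℤ := fun i j => if i = j then 0 else 1

def rookP (n : ℕ) [NeZero n] : Matrix (Fin n) (Fin n) ℤ :=
  fun i j => if j = 0 then 1 else if i = j then 1 else 0

def rookS (n : ℕ) [NeZero n] : Matrix (Fin n) (Fin n) ℤ :=
  fun i k => if i = 0 then (if k = 0 then (n : ℤ) - 1 else 1) else if i = k then -1 else 0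

lemma rookAdj_eq [NeZero n] : rookAdj n = rookB n ⊗ₖ 1 + 1 ⊗ₖ rookB n := by
  ext ⟨i, j⟩ ⟨k, l⟩
  simp only [rookAdj, rookB, Matrix.add_apply, Matrix.kroneckerMap_apply, Matrix.one_apply,
    ne_eq, Prod.mk.injEq, not_and]
  rcases eq_or_ne i k with hik | hik <;> rcases eq_or_ne j l with hjl | hjl <;>
    simp [hik, hjl]

lemma rookBP [NeZero n] : rookB n * rookP n = rookP n * rookS n := by
  ext i k
  rw [Matrix.mul_apply, Matrix.mul_apply]
  rcases eq_or_ne k 0 with hk | hk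
  · subst hk
    have h1 : ∀ w : Fin n, rookB n i w * rookP n w 0 = 1 - (if i = w then 1 else 0) := by
      intro w; rcases eq_or_ne i w with h | h <;> simp [rookB, rookP, h]
    have h2 : ∀ w : Fin n, rookP n i w * rookS n w 0 =
        if w = 0 then (n : ℤ) - 1 else 0 := by
      intro w
      rcases eq_or_ne w 0 with hw | hw <;> simp [rookP, rookS, hw]
    simp_rw [h1, h2, Finset.sum_sub_distrib, Finset.sum_const, Finset.sum_ite_eq,
      Finset.sum_ite_eq', Finset.mem_univ, if_pos]
    simp [mul_comm]
  · have h1 : ∀ w : Fin n, rookB n i w * rookP n w k =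
        if w = k then (if i = k then 0 else 1) else 0 := by
      intro w
      rcases eq_or_ne w k with hw | hw <;> simp [rookB, rookP, hw, hk]
    have h2 : ∀ w : Fin n, rookP n i w * rookS n w k =
        (if w = 0 then 1 else 0) + (if w = k then (if i = k then -1 else 0) else 0) := by
      intro w
      rcases eq_or_ne w 0 with hw | hw
      · subst hw
        simp [rookP, rookS, hk, (Ne.symm hk)]
      · rcases eq_or_ne w k with hwk | hwk
        · subst hwk
          rcases eq_or_ne i w with hiw | hiw
          · subst hiw; simp [rookP, rookS, hw]
          · simp [rookP, rookS, hw, hiw]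
        · rcases eq_or_ne i w with hiw | hiw <;> simp [rookP, rookS, hw, hwk, hiw, Ne.symm hwk]
    simp_rw [h1, h2, Finset.sum_add_distrib, Finset.sum_ite_eq', Finset.mem_univ, if_pos]
    split <;> ring

lemma rookP_det [NeZero n] : (rookP n).det = 1 := by
  rw [Matrix.det_of_lowerTriangular (rookP n) (by
    intro i j h
    have hij : i < j := h
    have : j ≠ 0 := fun hj => by subst hj; exact absurd hij (by simp [Fin.not_lt_zero]  )
    simp [rookP, this, Fin.ne_of_lt hij])]
  refine Finset.prod_eq_one fun i _ => ?_
  rcases eq_or_ne i 0 with h | h <;> simp [rookP, h]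

def rookM (n : ℕ) [NeZero n] : Matrix (Fin n × Fin n) (Fin n × Fin n) ℤ :=
  rookS n ⊗ₖ 1 + 1 ⊗ₖ rookS n

lemma rook_conj [NeZero n] :
    rookAdj n * (rookP n ⊗ₖ rookP n) = (rookP n ⊗ₖ rookP n) * rookM n := by
  rw [rookAdj_eq, rookM, add_mul, mul_add, ← Matrix.mul_kronecker_mul,
    ← Matrix.mul_kronecker_mul, ← Matrix.mul_kronecker_mul, ← Matrix.mul_kronecker_mul,
    rookBP, Matrix.one_mul, Matrix.mul_one]

lemma rookS_offdiag [NeZero n] {i k : Fin n} (h : rookS n i k ≠ 0) : i = k ∨ i = 0 := by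
  by_contra hc
  push_neg at hc
  simp [rookS, hc.1, hc.2] at h

lemma rookM_det [NeZero n] :
    (rookM n).det = ((n : ℤ) - 1 + ((n : ℤ) - 1)) * ((n : ℤ) - 2) ^ (n - 1) *
      (((n : ℤ) - 2) * (-2) ^ (n - 1)) ^ (n - 1) := by
  have d : Fin n → ℤ := fun i => if i = 0 then (n : ℤ) - 1 else -1
  have hdiag : ∀ i : Fin n, rookS n i i = (if i = 0 then (n : ℤ) - 1 else -1) := by
    intro i; rcases eq_or_ne i 0 with h | h <;> simp [rookS, h]
  -- reindex along Lex
  have hre : (rookM n).det = ((rookM n).submatrix (ofLex ∘ (id : Lex (Fin n × Fin n) → _))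
      (ofLex ∘ id)).det := by
    exact (Matrix.det_submatrix_equiv_self (ofLex : Lex (Fin n × Fin n) ≃ _) (rookM n)).symm
  rw [hre]
  rw [Matrix.det_of_upperTriangular (by
    intro u v h
    have hlt : toLex (ofLex v) < toLex (ofLex u) := h
    rw [Prod.Lex.lt_iff] at hlt
    simp only [ofLex_toLex] at hlt
    simp only [Matrix.submatrix_apply, Function.comp_apply, rookM, Matrix.add_apply,
      Matrix.kroneckerMap_apply, Matrix.one_apply]
    rcases hlt with hlt | ⟨heq, hlt⟩
    · have h1 : rookS n (ofLex u).1 (ofLex v).1 = 0 := by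
        by_contra hne
        rcases rookS_offdiag hne with he | he
        · rw [he] at hlt; exact absurd hlt (lt_irrefl _)
        · rw [he] at hlt; exact absurd hlt (by simp)
      have h2 : (ofLex u).1 ≠ (ofLex v).1 := Fin.ne_of_gt hlt
      simp [h1, h2]
    · have hne : (ofLex u).2 ≠ (ofLex v).2 := Fin.ne_of_gt hlt
      have h1 : rookS n (ofLex u).2 (ofLex v).2 = 0 := by
        by_contra hne'
        rcases rookS_offdiag hne' with he | he
        · rw [he] at hlt; exact absurd hlt (lt_irrefl _)
        · rw [he] at hlt; exact absurd hlt (by simp)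
      simp [h1, hne])]
  have hprod : ∏ u : Lex (Fin n × Fin n),
      ((rookM n).submatrix (ofLex ∘ id) (ofLex ∘ id)) u u
      = ∏ p : Fin n × Fin n, rookM n p p :=
    Equiv.prod_comp (ofLex : Lex (Fin n × Fin n) ≃ _) (fun p => rookM n p p)
  rw [hprod]
  have hdd : ∀ p : Fin n × Fin n, rookM n p p =
      (if p.1 = 0 then (n : ℤ) - 1 else -1) + (if p.2 = 0 then (n : ℤ) - 1 else -1) := by
    rintro ⟨i, j⟩
    simp [rookM, hdiag]
  simp_rw [hdd]
  rw [show (∏ p : Fin n × Fin n,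
        ((if p.1 = 0 then (n : ℤ) - 1 else -1) + (if p.2 = 0 then (n : ℤ) - 1 else -1)))
      = ∏ i : Fin n, ∏ j : Fin n,
        ((if i = 0 then (n : ℤ) - 1 else -1) + (if j = 0 then (n : ℤ) - 1 else -1)) from
    Fintype.prod_prod_type _]
  have hcard0 : (Finset.univ \ {(0 : Fin n)}).card = n - 1 := by
    rw [Finset.card_sdiff_of_subset (Finset.subset_univ _)]
    simp
  have hinner : ∀ c : ℤ, (∏ j : Fin n, (c + if j = 0 then (n : ℤ) - 1 else -1))
      = (c + ((n : ℤ) - 1)) * (c + -1) ^ (n - 1) := by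
    intro c
    rw [Finset.prod_eq_prod_diff_singleton_mul (Finset.mem_univ (0 : Fin n))]
    have h0 : ∏ j ∈ Finset.univ \ {(0 : Fin n)}, (c + if j = 0 then (n : ℤ) - 1 else -1)
        = ∏ _j ∈ Finset.univ \ {(0 : Fin n)}, (c + -1) :=
      Finset.prod_congr rfl (fun j hj => by
        have hj' : j ≠ 0 := by simpa using (Finset.mem_sdiff.mp hj).2
        simp [hj'])
    rw [h0, Finset.prod_const, hcard0, if_pos rfl, mul_comm]
  simp_rw [hinner]
  rw [Finset.prod_eq_prod_diff_singleton_mul (Finset.mem_univ (0 : Fin n))]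
  have h1 : ∏ i ∈ Finset.univ \ {(0 : Fin n)},
      (((if i = 0 then (n : ℤ) - 1 else -1) + ((n : ℤ) - 1)) *
        ((if i = 0 then (n : ℤ) - 1 else -1) + -1) ^ (n - 1))
      = ∏ _i ∈ Finset.univ \ {(0 : Fin n)}, ((-1 + ((n : ℤ) - 1)) * (-1 + -1) ^ (n - 1)) :=
    Finset.prod_congr rfl (fun i hi => by
      have hi' : i ≠ 0 := by simpa using (Finset.mem_sdiff.mp hi).2
      simp [hi'])
  rw [h1, Finset.prod_const, hcard0, if_pos rfl]
  ring_nf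


lemma int_mulVecLin_injective {ι : Type*} [Fintype ι] [DecidableEq ι] (A : Matrix ι ι ℤ)
    (hA : A.det ≠ 0) : Function.Injective A.mulVecLin := by
  have hdet : ((Int.castRingHom ℚ).mapMatrix A).det ≠ 0 := by
    rw [← RingHom.map_det]
    simpa using hA
  have hQ : Function.Injective ((Int.castRingHom ℚ).mapMatrix A).mulVec :=
    mulVec_injective_iff_isUnit.mpr ((isUnit_iff_isUnit_det _).mpr (isUnit_iff_ne_zero.mpr hdet))
  intro x y hxy
  have : ((Int.castRingHom ℚ).mapMatrix A).mulVec ((Int.castRingHom ℚ) ∘ x)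
      = ((Int.castRingHom ℚ).mapMatrix A).mulVec ((Int.castRingHom ℚ) ∘ y) := by
    ext i
    rw [show ((Int.castRingHom ℚ).mapMatrix A) = A.map (Int.castRingHom ℚ) from rfl]
    rw [← RingHom.map_mulVec, ← RingHom.map_mulVec]
    simp only [mulVecLin_apply] at hxy
    rw [hxy]
  have hx := hQ this
  funext i
  have := congrFun hx i
  simpa using this

lemma int_coker_card {ι : Type*} [Fintype ι] [DecidableEq ι] (A : Matrix ι ι ℤ)
    (hA : A.det ≠ 0) :
    Nat.card ((ι → ℤ) ⧸ LinearMap.range A.mulVecLin) = A.det.natAbs := by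
  classical
  set N := LinearMap.range A.mulVecLin with hN
  have hinj := int_mulVecLin_injective A hA
  obtain ⟨m, snf⟩ := N.smithNormalForm (Pi.basisFun ℤ ι)
  obtain ⟨bM, bN, f, a, ha⟩ := snf
  -- m = card ι
  let e1 : (ι → ℤ) ≃ₗ[ℤ] N := LinearEquiv.ofInjective _ hinj
  have hm : m = Fintype.card ι := by
    have h1 : Module.finrank ℤ N = m := by
      rw [Module.finrank_eq_card_basis bN, Fintype.card_fin]
    have h2 : Module.finrank ℤ N = Fintype.card ι := by
      rw [← LinearEquiv.finrank_eq e1, Module.finrank_pi]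
    omega
  have hfbij : Function.Bijective f :=
    (Fintype.bijective_iff_injective_and_card f).mpr ⟨f.injective, by rw [Fintype.card_fin]; exact hm⟩
  let e : Fin m ≃ ι := Equiv.ofBijective f hfbij
  let bN' : Module.Basis ι ℤ N := bN.reindex e
  let e2 : (ι → ℤ) ≃ₗ[ℤ] N := bM.equiv bN' (Equiv.refl ι)
  let g : (ι → ℤ) →ₗ[ℤ] (ι → ℤ) := N.subtype ∘ₗ (e2 : (ι → ℤ) →ₗ[ℤ] N)
  have hg : ∀ i, g (bM i) = a (e.symm i) • bM i := by
    intro i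
    have : (e2 (bM i) : ι → ℤ) = (bN' i : ι → ℤ) := by
      simp [e2, Module.Basis.equiv_apply]
    have h2 : (bN' i : ι → ℤ) = a (e.symm i) • bM i := by
      rw [show bN' i = bN (e.symm i) from Module.Basis.reindex_apply bN e i, ha]
      congr 1
      exact congrArg bM (e.apply_symm_apply i)
    simpa [g] using this.trans h2
  have hmat : LinearMap.toMatrix bM bM g = Matrix.diagonal (fun i => a (e.symm i)) := by
    ext i j
    rw [LinearMap.toMatrix_apply, hg, LinearEquiv.map_smul, Module.Basis.repr_self, Finsupp.smul_single, smul_eq_mul,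
      mul_one]
    by_cases h : i = j
    · subst h; rw [Matrix.diagonal_apply_eq, Finsupp.single_eq_same]
    · rw [Matrix.diagonal_apply_ne _ h, Finsupp.single_eq_of_ne h]
  have hdetg : LinearMap.det g = ∏ i, a (e.symm i) := by
    rw [← LinearMap.det_toMatrix bM, hmat, Matrix.det_diagonal]
  -- A.mulVecLin = g ∘ (e2.symm ∘ e1)
  have hcomp : A.mulVecLin = g ∘ₗ ((e1 ≪≫ₗ e2.symm : (ι → ℤ) ≃ₗ[ℤ] (ι → ℤ)) : (ι → ℤ) →ₗ[ℤ] (ι → ℤ)) := by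
    apply LinearMap.ext; intro x
    simp only [LinearMap.comp_apply, LinearEquiv.coe_coe, LinearEquiv.trans_apply, g,
      Submodule.coe_subtype, LinearEquiv.apply_symm_apply, LinearMap.coe_comp,
      Function.comp_apply]
    exact (LinearEquiv.ofInjective_apply A.mulVecLin x).symm
  have hdetA : LinearMap.det A.mulVecLin = A.det := by
    have : A.mulVecLin = Matrix.toLin' A := by ext x; simp [Matrix.toLin'_apply]
    rw [this, LinearMap.det_toLin']
  have hunit : IsUnit (LinearMap.det ((e1 ≪≫ₗ e2.symm : (ι → ℤ) ≃ₗ[ℤ] (ι → ℤ)) : (ι → ℤ) →ₗ[ℤ] (ι → ℤ))) :=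
    LinearEquiv.isUnit_det' _
  have habs : A.det.natAbs = (∏ i, a (e.symm i)).natAbs := by
    have := congrArg LinearMap.det hcomp
    rw [hdetA, LinearMap.det_comp, hdetg] at this
    rw [this]
    rcases Int.isUnit_iff.mp hunit with h | h <;> rw [h] <;> simp [Int.natAbs_mul]
  -- index computation
  have hcard : Nat.card ((ι → ℤ) ⧸ N) = N.toAddSubgroup.index := rfl
  have hidx : N.toAddSubgroup.index = ∏ i : Fin m, (a i).natAbs := by
    have := Module.Basis.SmithNormalForm.toAddSubgroup_index_eq_pow_mul_prod
      (N := N) ⟨bM, bN, f, a, ha⟩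
    simp only at this
    have hsub : Fintype.card ι - m = 0 := by omega
    rw [this, hsub, pow_zero, one_mul]
    simp [Ideal.span_singleton_toAddSubgroup_eq_zmultiples, Int.index_zmultiples]
  rw [hcard, hidx, habs]
  have hmp : (∏ i : ι, a (e.symm i)).natAbs = ∏ i : ι, (a (e.symm i)).natAbs :=
    map_prod Int.natAbsHom _ _
  rw [hmp]
  exact (Fintype.prod_equiv e.symm (fun i => (a (e.symm i)).natAbs) (fun i => (a i).natAbs)
    (fun i => rfl)).symm

/-- The determinant of the adjacency matrix of the rook's graph is
`(-2)^{(n-1)²} (n-2)^{2n-2} · 2(n-1)`; consequently the Smith group (the cokernel of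
the adjacency matrix over `ℤ`) is finite of order `2^{(n-1)²} (n-2)^{2n-2} · 2(n-1)`. -/
theorem rook_adj_det_and_smith_group_card (n : ℕ) (hn : 3 ≤ n) :
    (rookAdj n).det = (-2) ^ ((n - 1) ^ 2) * ((n : ℤ) - 2) ^ (2 * n - 2) * (2 * ((n : ℤ) - 1)) ∧
    Finite ((Fin n × Fin n → ℤ) ⧸ LinearMap.range (rookAdj n).mulVecLin) ∧
    Nat.card ((Fin n × Fin n → ℤ) ⧸ LinearMap.range (rookAdj n).mulVecLin)
      = 2 ^ ((n - 1) ^ 2) * (n - 2) ^ (2 * n - 2) * (2 * (n - 1)) := by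
  haveI : NeZero n := ⟨by omega⟩
  have hPP : ((rookP n ⊗ₖ rookP n : Matrix (Fin n × Fin n) (Fin n × Fin n) ℤ)).det = 1 := by
    simp [Matrix.det_kronecker, rookP_det]
  have hdet0 : (rookAdj n).det = (rookM n).det := by
    have := congrArg Matrix.det (rook_conj (n := n))
    rw [Matrix.det_mul, Matrix.det_mul, hPP, mul_one, one_mul] at this
    exact this
  have hexp1 : 2 * n - 2 = (n - 1) + (n - 1) := by omega
  have hexp2 : (n - 1) ^ 2 = (n - 1) * (n - 1) := by rw [pow_two]
  have hdet : (rookAdj n).det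
      = (-2) ^ ((n - 1) ^ 2) * ((n : ℤ) - 2) ^ (2 * n - 2) * (2 * ((n : ℤ) - 1)) := by
    rw [hdet0, rookM_det, hexp1, hexp2, pow_add, mul_pow, ← pow_mul]
    ring
  refine ⟨hdet, ?_, ?_⟩
  · have hne : (rookAdj n).det ≠ 0 := by
      rw [hdet]
      refine mul_ne_zero (mul_ne_zero (pow_ne_zero _ (by norm_num)) (pow_ne_zero _ (by omega)))
        (by omega)
    have hcard := int_coker_card (rookAdj n) hne
    refine Nat.finite_of_card_ne_zero ?_
    rw [hcard]
    simpa using hne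
  · have hne : (rookAdj n).det ≠ 0 := by
      rw [hdet]
      refine mul_ne_zero (mul_ne_zero (pow_ne_zero _ (by norm_num)) (pow_ne_zero _ (by omega)))
        (by omega)
    rw [int_coker_card (rookAdj n) hne, hdet]
    have c1 : ((n : ℤ) - 2) = ((n - 2 : ℕ) : ℤ) := by omega
    have c2 : (2 * ((n : ℤ) - 1)) = ((2 * (n - 1) : ℕ) : ℤ) := by push_cast; omega
    rw [Int.natAbs_mul, Int.natAbs_mul, Int.natAbs_pow, Int.natAbs_pow, c1, c2,
      Int.natAbs_natCast, Int.natAbs_natCast]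
    norm_num
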